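/- If G is a graph on n vertices with x_{1/2}(G) ≥ 1/2, then tw(G) ≥ ⌊n/8⌋. -/

import Mathlib

/-- A tree decomposition of a simple graph `G`. -/
structure TreeDecomp {V : Type} (G : SimpleGraph V) where
  ι : Type
  T : SimpleGraph ι
  tree : T.IsTree
  bag : ι → Finset V
  mem_bag : ∀ v : V, ∃ i, v ∈ bag i
  edge_bag : ∀ u v : V, G.Adj u v → ∃ i, u ∈ bag i ∧ v ∈ bag i
  coherent : ∀ v : V, (T.induce {i | v ∈ bag i}).Connected

/-- The treewidth of a simple graph: the least `w` admitting a tree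
decomposition all of whose bags have at most `w + 1` vertices. -/
noncomputable def treewidth {V : Type} (G : SimpleGraph V) : ℕ :=
  sInf {w | ∃ D : TreeDecomp G, ∀ i, (D.bag i).card ≤ w + 1}

/-- The external neighborhood of a vertex set `X`. -/
def extNbhd {V : Type} (G : SimpleGraph V) (X : Set V) : Set V :=
  {v : V | v ∉ X ∧ ∃ u ∈ X, G.Adj u v}

/-- The vertex expansion of `G` with parameter `α`:
the minimum of `|N(X)| / |X|` over nonempty sets `X` with `|X| ≤ α |V|`. -/
noncomputable def vertexExpansion {V : Type} [Fintype V]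
    (G : SimpleGraph V) (α : ℝ) : ℝ :=
  sInf {r : ℝ | ∃ X : Set V, X.Nonempty ∧ (X.ncard : ℝ) ≤ α * Fintype.card V ∧
    r = (extNbhd G X).ncard / X.ncard}


open SimpleGraph

namespace TWAux

variable {ι : Type} {T : SimpleGraph ι}

/-- The set of nodes on the `j` side of the edge `{i,j}`. -/
def side (T : SimpleGraph ι) (i j : ι) : Set ι :=
  {k | (T.deleteEdges {s(i, j)}).Reachable k j}

lemma mem_side_self (i j : ι) : j ∈ side T i j := Reachable.refl _

lemma side_swap_edge (i j k : ι) : k ∈ side T i j ↔ (T.deleteEdges {s(j, i)}).Reachable k j := by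
  rw [side, Set.mem_setOf_eq, Sym2.eq_swap]

lemma not_reachable_del (hT : T.IsTree) (hij : T.Adj i j) :
    ¬ (T.deleteEdges {s(i, j)}).Reachable i j := by
  have hb := (isAcyclic_iff_forall_adj_isBridge.mp hT.IsAcyclic) hij
  rw [isBridge_iff] at hb
  exact hb

lemma side_disjoint (hT : T.IsTree) (hij : T.Adj i j) (k : ι)
    (h1 : k ∈ side T i j) (h2 : k ∈ side T j i) : False := by
  rw [side_swap_edge] at h1
  exact not_reachable_del hT hij.symm (h1.symm.trans h2)

lemma reach_of_walk (i j : ι) {k l : ι} (W : T.Walk k l) :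
    (T.deleteEdges {s(i, j)}).Reachable k i ∨ (T.deleteEdges {s(i, j)}).Reachable k j ∨
      (T.deleteEdges {s(i, j)}).Reachable k l := by
  induction W with
  | nil => exact Or.inr (Or.inr (Reachable.refl _))
  | @cons a c l h W ih =>
    by_cases he : s(a, c) = s(i, j)
    · rw [Sym2.eq_iff] at he
      rcases he with ⟨rfl, rfl⟩ | ⟨rfl, rfl⟩
      · exact Or.inl (Reachable.refl _)
      · exact Or.inr (Or.inl (Reachable.refl _))
    · have hadj : (T.deleteEdges {s(i, j)}).Adj a c := by
        rw [deleteEdges_adj]; exact ⟨h, by simpa using he⟩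
      rcases ih with h' | h' | h'
      · exact Or.inl (hadj.reachable.trans h')
      · exact Or.inr (Or.inl (hadj.reachable.trans h'))
      · exact Or.inr (Or.inr (hadj.reachable.trans h'))

lemma side_union (hT : T.IsTree) (i j : ι) (k : ι) : k ∈ side T i j ∨ k ∈ side T j i := by
  obtain ⟨W⟩ := hT.isConnected.preconnected k j
  rcases reach_of_walk i j W with h | h | h
  · right; show (T.deleteEdges {s(j, i)}).Reachable k i; rwa [Sym2.eq_swap]
  · left; exact h
  · left; exact h

/-- Walk classification after deleting two edges `{i,j}` and `{j,j'}`. -/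
lemma reach_of_walk2 (i j j' : ι) {k l : ι} (W : T.Walk k l) :
    (T.deleteEdges {s(i, j), s(j, j')}).Reachable k i ∨
    (T.deleteEdges {s(i, j), s(j, j')}).Reachable k j ∨
    (T.deleteEdges {s(i, j), s(j, j')}).Reachable k j' ∨
    (T.deleteEdges {s(i, j), s(j, j')}).Reachable k l := by
  induction W with
  | nil => exact Or.inr (Or.inr (Or.inr (Reachable.refl _)))
  | @cons a c l h W ih =>
    by_cases he1 : s(a, c) = s(i, j)
    · rw [Sym2.eq_iff] at he1
      rcases he1 with ⟨rfl, rfl⟩ | ⟨rfl, rfl⟩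
      · exact Or.inl (Reachable.refl _)
      · exact Or.inr (Or.inl (Reachable.refl _))
    · by_cases he2 : s(a, c) = s(j, j')
      · rw [Sym2.eq_iff] at he2
        rcases he2 with ⟨rfl, rfl⟩ | ⟨rfl, rfl⟩
        · exact Or.inr (Or.inl (Reachable.refl _))
        · exact Or.inr (Or.inr (Or.inl (Reachable.refl _)))
      · have hadj : (T.deleteEdges {s(i, j), s(j, j')}).Adj a c := by
          rw [deleteEdges_adj]
          refine ⟨h, ?_⟩
          simp only [Set.mem_insert_iff, Set.mem_singleton_iff]
          tauto
        rcases ih with h' | h' | h' | h'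
        · exact Or.inl (hadj.reachable.trans h')
        · exact Or.inr (Or.inl (hadj.reachable.trans h'))
        · exact Or.inr (Or.inr (Or.inl (hadj.reachable.trans h')))
        · exact Or.inr (Or.inr (Or.inr (hadj.reachable.trans h')))

lemma same_side {j j' : ι} {a b : ι} (W : T.Walk a b) (hj : j ∉ W.support)
    (hb : b ∈ side T j j') : a ∈ side T j j' := by
  induction W with
  | nil => exact hb
  | @cons a c l h W ih =>
    have hja : a ≠ j := by rintro rfl; exact hj (Walk.start_mem_support _)
    have hjc : c ≠ j := by
      rintro rfl
      exact hj (by rw [Walk.support_cons]; exact List.mem_cons_of_mem _ (Walk.start_mem_support _))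
    have hadj : (T.deleteEdges {s(j, j')}).Adj a c := by
      rw [deleteEdges_adj]
      refine ⟨h, ?_⟩
      simp only [Set.mem_singleton_iff, Sym2.eq_iff]
      rintro (⟨rfl, rfl⟩ | ⟨rfl, rfl⟩) <;> simp at hja hjc
    refine hadj.reachable.trans (ih ?_ hb)
    intro hmem
    exact hj (by rw [Walk.support_cons]; exact List.mem_cons_of_mem _ hmem)


lemma le_del_one₁ (e e' : Sym2 ι) : T.deleteEdges {e, e'} ≤ T.deleteEdges {e} := by
  intro a b hab
  rw [deleteEdges_adj] at hab ⊢
  exact ⟨hab.1, fun h => hab.2 (by rw [Set.mem_singleton_iff] at h; exact Or.inl h)⟩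

lemma le_del_one₂ (e e' : Sym2 ι) : T.deleteEdges {e, e'} ≤ T.deleteEdges {e'} := by
  intro a b hab
  rw [deleteEdges_adj] at hab ⊢
  exact ⟨hab.1, fun h => hab.2 (by rw [Set.mem_singleton_iff] at h; exact Or.inr h)⟩

lemma side_nest (hT : T.IsTree) {i j j' : ι} (hij : T.Adj i j) (hjj' : T.Adj j j')
    (hne : j' ≠ i) {k : ι} (hk : k ∈ side T j j') : k ∈ side T i j ∧ k ≠ j := by
  have hkj : k ≠ j := by
    rintro rfl
    exact not_reachable_del hT hjj' hk
  obtain ⟨Wk⟩ := hk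
  have W : T.Walk k j' := Wk.map (Hom.ofLE (T.deleteEdges_le _))
  have hWk : ∀ x y, (T.deleteEdges {s(j, j')}).Adj x y → True := fun _ _ _ => trivial
  have hadj_ij : (T.deleteEdges {s(j, j')}).Adj j i := by
    rw [deleteEdges_adj]
    refine ⟨hij.symm, ?_⟩
    simp only [Set.mem_singleton_iff, Sym2.eq_iff]
    rintro (⟨-, h2⟩ | ⟨h2, -⟩)
    · exact hne h2.symm
    · exact hjj'.ne h2
  have hadj_j'j : (T.deleteEdges {s(i, j)}).Adj j' j := by
    rw [deleteEdges_adj]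
    refine ⟨hjj'.symm, ?_⟩
    simp only [Set.mem_singleton_iff, Sym2.eq_iff]
    rintro (⟨h2, -⟩ | ⟨h2, -⟩)
    · exact hne h2
    · exact hjj'.ne' h2
  rcases reach_of_walk2 i j j' W with h' | h' | h' | h'
  · -- k reaches i without either edge : then j → i → k → j' avoids e', contradiction
    have h1 : (T.deleteEdges {s(j, j')}).Reachable k i := h'.mono (le_del_one₂ _ _)
    exact absurd (hadj_ij.reachable.trans (h1.symm.trans ⟨Wk⟩)) (not_reachable_del hT hjj')
  · have h1 : (T.deleteEdges {s(j, j')}).Reachable k j := h'.mono (le_del_one₂ _ _)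
    exact absurd (h1.symm.trans ⟨Wk⟩) (not_reachable_del hT hjj')
  · refine ⟨?_, hkj⟩
    have h1 : (T.deleteEdges {s(i, j)}).Reachable k j' := h'.mono (le_del_one₁ _ _)
    exact h1.trans hadj_j'j.reachable
  · refine ⟨?_, hkj⟩
    have h1 : (T.deleteEdges {s(i, j)}).Reachable k j' := h'.mono (le_del_one₁ _ _)
    exact h1.trans hadj_j'j.reachable

lemma crossing (hT : T.IsTree) {i j : ι} (hij : T.Adj i j) {a b : ι} (W : T.Walk a b)
    (ha : a ∈ side T i j) (hb : b ∈ side T j i) : i ∈ W.support ∧ j ∈ W.support := by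
  induction W with
  | nil => exact (side_disjoint hT hij _ ha hb).elim
  | @cons a c l h W ih =>
    by_cases he : s(a, c) = s(i, j)
    · rcases Sym2.eq_iff.mp he with ⟨rfl, rfl⟩ | ⟨rfl, rfl⟩
      · exact (side_disjoint hT hij _ ha (mem_side_self _ _)).elim
      · refine ⟨?_, ?_⟩
        · rw [Walk.support_cons]; exact List.mem_cons_of_mem _ (Walk.start_mem_support W)
        · rw [Walk.support_cons]; exact List.mem_cons_self
    · have hadj : (T.deleteEdges {s(i, j)}).Adj a c := by
        rw [deleteEdges_adj]; exact ⟨h, by simpa using he⟩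
      have hc : c ∈ side T i j := hadj.symm.reachable.trans ha
      obtain ⟨h1, h2⟩ := ih hc hb
      exact ⟨by rw [Walk.support_cons]; exact List.mem_cons_of_mem _ h1,
        by rw [Walk.support_cons]; exact List.mem_cons_of_mem _ h2⟩


noncomputable def pth (hT : T.IsTree) (a b : ι) : T.Path a b :=
  letI := Classical.decEq ι
  (Classical.choice (hT.isConnected.preconnected a b)).toPath

lemma path_support_subset (hT : T.IsTree) {a b : ι} (P : T.Path a b) (W : T.Walk a b) :
    P.1.support ⊆ W.support := by
  letI := Classical.decEq ι
  have h := hT.IsAcyclic.path_unique P W.toPath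
  rw [h]
  exact W.support_bypass_subset

section Decomp

set_option linter.unusedSectionVars false

variable {V : Type} [Fintype V] {G : SimpleGraph V}

/-- Vertices appearing in bags on the `j` side of tree edge `{i,j}`. -/
def VS (D : TreeDecomp G) (i j : D.ι) : Set V := {v | ∃ k ∈ side D.T i j, v ∈ D.bag k}

noncomputable def wgt (D : TreeDecomp G) (i j : D.ι) : ℕ := (VS D i j \ VS D j i).ncard

/-- `C` is connected in `G` (by walks staying inside `C`). -/
def Conn (G : SimpleGraph V) (C : Set V) : Prop :=
  ∀ u ∈ C, ∀ w ∈ C, ∃ p : G.Walk u w, ∀ x ∈ p.support, x ∈ C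

lemma VS_cover (D : TreeDecomp G) (i j : D.ι) (v : V) : v ∈ VS D i j ∨ v ∈ VS D j i := by
  obtain ⟨k, hk⟩ := D.mem_bag v
  rcases side_union D.tree i j k with h | h
  · exact Or.inl ⟨k, h, hk⟩
  · exact Or.inr ⟨k, h, hk⟩

lemma mem_bag_of_mem_both (D : TreeDecomp G) {i j : D.ι} (hij : D.T.Adj i j) {v : V}
    (h1 : v ∈ VS D i j) (h2 : v ∈ VS D j i) : v ∈ D.bag i ∧ v ∈ D.bag j := by
  obtain ⟨a, haside, hva⟩ := h1
  obtain ⟨b, hbside, hvb⟩ := h2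
  obtain ⟨p⟩ := (D.coherent v).preconnected ⟨a, hva⟩ ⟨b, hvb⟩
  let W := p.map (SimpleGraph.Embedding.induce {k | v ∈ D.bag k}).toHom
  have hsup : ∀ x ∈ W.support, v ∈ D.bag x := by
    intro x hx
    rw [Walk.support_map] at hx
    obtain ⟨y, hy, rfl⟩ := List.mem_map.mp hx
    exact y.2
  obtain ⟨hi, hj⟩ := crossing D.tree hij W haside hbside
  exact ⟨hsup i hi, hsup j hj⟩

variable [Nonempty V]

noncomputable def rep (D : TreeDecomp G) (v : V) : D.ι := (D.mem_bag v).choose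

lemma rep_spec (D : TreeDecomp G) (v : V) : v ∈ D.bag (rep D v) := (D.mem_bag v).choose_spec

noncomputable def root (D : TreeDecomp G) : D.ι := rep D (Classical.arbitrary V)

def KK (D : TreeDecomp G) : Set D.ι :=
  {k | ∃ v : V, k ∈ (pth D.tree (root D) (rep D v)).1.support}

lemma KK_finite (D : TreeDecomp G) : (KK D).Finite := by
  have h : KK D = ⋃ v : V, {k | k ∈ (pth D.tree (root D) (rep D v)).1.support} := by
    ext x; simp [KK]
  rw [h]
  exact Set.finite_iUnion fun v => List.finite_toSet _

lemma rep_mem_KK (D : TreeDecomp G) (v : V) : rep D v ∈ KK D :=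
  ⟨v, Walk.end_mem_support _⟩

lemma root_mem_KK (D : TreeDecomp G) : root D ∈ KK D := rep_mem_KK D _

lemma KK_path_closed (D : TreeDecomp G) {a b : D.ι} (ha : a ∈ KK D) (hb : b ∈ KK D) :
    ∀ x ∈ (pth D.tree a b).1.support, x ∈ KK D := by
  classical
  obtain ⟨u, hu⟩ := ha
  obtain ⟨v, hv⟩ := hb
  set P1 := (pth D.tree (root D) (rep D u)).1
  set P2 := (pth D.tree (root D) (rep D v)).1
  have hW := path_support_subset D.tree (pth D.tree a b)
    (((P1.takeUntil a hu).reverse).append (P2.takeUntil b hv))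
  intro x hx
  have hx2 := hW hx
  rw [Walk.mem_support_append_iff] at hx2
  rcases hx2 with h | h
  · rw [Walk.support_reverse, List.mem_reverse] at h
    exact ⟨u, Walk.support_takeUntil_subset _ hu h⟩
  · exact ⟨v, Walk.support_takeUntil_subset _ hv h⟩

lemma trace_side (D : TreeDecomp G) {j j' : D.ι} {u : V} (hu : u ∉ D.bag j) {t1 t2 : D.ι}
    (h1 : u ∈ D.bag t1) (h2 : u ∈ D.bag t2) (hs : t1 ∈ side D.T j j') :
    t2 ∈ side D.T j j' := by
  obtain ⟨p⟩ := (D.coherent u).preconnected ⟨t2, h2⟩ ⟨t1, h1⟩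
  let W := p.map (SimpleGraph.Embedding.induce {k | u ∈ D.bag k}).toHom
  have hsup : ∀ x ∈ W.support, u ∈ D.bag x := by
    intro x hx
    rw [Walk.support_map] at hx
    obtain ⟨y, hy, rfl⟩ := List.mem_map.mp hx
    exact y.2
  refine same_side W (fun hj => hu (hsup j hj)) hs

lemma bad_step (D : TreeDecomp G) {j : D.ι} (hjK : j ∈ KK D) {C : Set V}
    (hC : Conn G C) (hCj : ∀ x ∈ C, x ∉ D.bag j) (hCne : C.Nonempty) :
    ∃ j', D.T.Adj j j' ∧ j' ∈ KK D ∧ C ⊆ VS D j j' \ VS D j' j := by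
  obtain ⟨v0, hv0⟩ := hCne
  have hrv : v0 ∈ D.bag (rep D v0) := rep_spec D v0
  have hjrv : j ≠ rep D v0 := fun h => hCj v0 hv0 (h ▸ hrv)
  obtain ⟨j', hadj, q, hq⟩ := Walk.exists_eq_cons_of_ne hjrv (pth D.tree j (rep D v0)).1
  have hpath := (pth D.tree j (rep D v0)).2
  rw [hq, Walk.cons_isPath_iff] at hpath
  have hj'K : j' ∈ KK D := by
    refine KK_path_closed D hjK (rep_mem_KK D v0) j' ?_
    rw [hq, Walk.support_cons]
    exact List.mem_cons_of_mem _ (Walk.start_mem_support q)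
  have hrvside : rep D v0 ∈ side D.T j j' := by
    refine same_side q.reverse ?_ (mem_side_self j j')
    rw [Walk.support_reverse, List.mem_reverse]
    exact hpath.2
  -- all bags containing vertices of C lie on the j' side
  have claim : ∀ u ∈ C, ∀ t, u ∈ D.bag t → t ∈ side D.T j j' := by
    intro u hu
    obtain ⟨p, hp⟩ := hC v0 hv0 u hu
    have key : ∀ (x y : V) (p : G.Walk x y), (∀ z ∈ p.support, z ∈ C) →
        (∃ t0, x ∈ D.bag t0 ∧ t0 ∈ side D.T j j') →
        ∀ t, y ∈ D.bag t → t ∈ side D.T j j' := by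
      intro x y p
      induction p with
      | nil =>
        rintro hsup ⟨t0, ht0, hs0⟩ t ht
        exact trace_side D (hCj _ (hsup _ (Walk.start_mem_support _))) ht0 ht hs0
      | @cons x c l h p ih =>
        rintro hsup ⟨t0, ht0, hs0⟩ t ht
        obtain ⟨t', ht'x, ht'c⟩ := D.edge_bag x c h
        have hxC : x ∈ C := hsup _ (Walk.start_mem_support _)
        have hcC : c ∈ C := hsup _ (by
          rw [Walk.support_cons]; exact List.mem_cons_of_mem _ (Walk.start_mem_support _))
        have ht' : t' ∈ side D.T j j' := trace_side D (hCj _ hxC) ht0 ht'x hs0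
        refine ih (fun z hz => hsup z (by rw [Walk.support_cons]; exact List.mem_cons_of_mem _ hz))
          ⟨t', ht'c, ht'⟩ t ht
    exact key v0 u p hp ⟨rep D v0, hrv, hrvside⟩
  refine ⟨j', hadj, hj'K, fun u hu => ⟨⟨rep D u, claim u hu _ (rep_spec D u), rep_spec D u⟩, ?_⟩⟩
  intro hmem
  exact hCj u hu (mem_bag_of_mem_both D hadj ⟨rep D u, claim u hu _ (rep_spec D u), rep_spec D u⟩
    hmem).1


lemma wgt_add_le (D : TreeDecomp G) (i j : D.ι) : wgt D i j + wgt D j i ≤ Fintype.card V := by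
  rw [wgt, wgt, ← Set.ncard_union_eq disjoint_sdiff_sdiff (Set.toFinite _) (Set.toFinite _)]
  have h := Set.ncard_le_ncard (Set.subset_univ ((VS D i j \ VS D j i) ∪ (VS D j i \ VS D i j)))
    Set.finite_univ
  rwa [Set.ncard_univ, Nat.card_eq_fintype_card] at h

lemma exists_good_bag (D : TreeDecomp G) :
    ∃ j : D.ι, ∀ C : Set V, Conn G C → (∀ x ∈ C, x ∉ D.bag j) →
      2 * C.ncard ≤ Fintype.card V := by
  by_contra hno
  push_neg at hno
  have hbad : ∀ j : D.ι, j ∈ KK D → ∃ j', D.T.Adj j j' ∧ j' ∈ KK D ∧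
      Fintype.card V < 2 * wgt D j j' := by
    intro j hjK
    obtain ⟨C, hC1, hC2, hC3⟩ := hno j
    have hCne : C.Nonempty := by
      rw [Set.nonempty_iff_ne_empty]
      rintro rfl
      rw [Set.ncard_empty] at hC3
      omega
    obtain ⟨j', hadj, hK, hsub⟩ := bad_step D hjK hC1 hC2 hCne
    refine ⟨j', hadj, hK, lt_of_lt_of_le hC3 ?_⟩
    have h := Set.ncard_le_ncard hsub (Set.toFinite _)
    rw [wgt]
    omega
  set O : Set (D.ι × D.ι) :=
    {p | D.T.Adj p.1 p.2 ∧ p.2 ∈ KK D ∧ Fintype.card V < 2 * wgt D p.1 p.2} with hO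
  have hOne : O.Nonempty := by
    obtain ⟨j', hadj, hK, hw⟩ := hbad (root D) (root_mem_KK D)
    exact ⟨(root D, j'), hadj, hK, hw⟩
  set m : D.ι × D.ι → ℕ := fun p => (side D.T p.1 p.2 ∩ KK D).ncard with hm
  obtain ⟨p, hpO, hpmin⟩ : ∃ p ∈ O, m p = sInf (m '' O) := by
    obtain ⟨p, hp, he⟩ := Nat.sInf_mem (hOne.image m)
    exact ⟨p, hp, he⟩
  obtain ⟨i, j⟩ := p
  simp only [hO, Set.mem_setOf_eq] at hpO
  obtain ⟨hij, hjK, hwij⟩ := hpO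
  obtain ⟨j', hadj, hj'K, hwj⟩ := hbad j hjK
  by_cases hne : j' = i
  · subst hne
    have h := wgt_add_le D j' j
    omega
  · have hlt : m (j, j') < m (i, j) := by
      have hsub2 : side D.T j j' ∩ KK D ⊆ (side D.T i j ∩ KK D) \ {j} := by
        rintro k ⟨hk1, hk2⟩
        obtain ⟨h1, h2⟩ := side_nest D.tree hij hadj hne hk1
        exact ⟨⟨h1, hk2⟩, h2⟩
      have hss : side D.T j j' ∩ KK D ⊂ side D.T i j ∩ KK D := by
        refine ⟨hsub2.trans Set.diff_subset, fun hsup => ?_⟩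
        have hj : j ∈ side D.T j j' ∩ KK D := hsup ⟨mem_side_self i j, hjK⟩
        exact (side_nest D.tree hij hadj hne hj.1).2 rfl
      exact Set.ncard_lt_ncard hss ((KK_finite D).subset Set.inter_subset_right)
    have hle : sInf (m '' O) ≤ m (j, j') :=
      Nat.sInf_le (Set.mem_image_of_mem m (show (j, j') ∈ O from ⟨hadj, hj'K, hwj⟩))
    omega

lemma greedy {α : Type} [DecidableEq α] (n : ℕ) (f : α → ℕ) :
    ∀ s : Finset α, (∀ a ∈ s, 4 * f a ≤ n) → n < 4 * ∑ a ∈ s, f a →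
      ∃ t ⊆ s, n < 4 * ∑ a ∈ t, f a ∧ 2 * ∑ a ∈ t, f a ≤ n := by
  intro s
  induction s using Finset.induction_on with
  | empty => intro h htot; simp at htot
  | @insert a s ha ih =>
    intro h htot
    by_cases hrest : n < 4 * ∑ b ∈ s, f b
    · obtain ⟨t, ht1, ht2, ht3⟩ := ih (fun b hb => h b (Finset.mem_insert_of_mem hb)) hrest
      exact ⟨t, ht1.trans (Finset.subset_insert a s), ht2, ht3⟩
    · refine ⟨insert a s, Finset.Subset.refl _, htot, ?_⟩
      rw [Finset.sum_insert ha] at htot ⊢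
      have h1 := h a (Finset.mem_insert_self a s)
      omega

lemma greedy' {α : Type} [DecidableEq α] (n : ℕ) (f : α → ℕ) (s : Finset α)
    (hle : ∀ a ∈ s, 2 * f a ≤ n) (htot : n < 4 * ∑ a ∈ s, f a) :
    ∃ t ⊆ s, n < 4 * ∑ a ∈ t, f a ∧ 2 * ∑ a ∈ t, f a ≤ n := by
  by_cases hbig : ∃ a ∈ s, n < 4 * f a
  · obtain ⟨a, has, hb⟩ := hbig
    refine ⟨{a}, Finset.singleton_subset_iff.mpr has, by simpa using hb, by simpa using hle a has⟩
  · push_neg at hbig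
    exact greedy n f s hbig htot

end Decomp

end TWAux


open TWAux in
lemma bag_bound {V : Type} [Fintype V] [Nonempty V] {G : SimpleGraph V}
    (hexp : (1 : ℝ) / 2 ≤ vertexExpansion G (1 / 2))
    (D : TreeDecomp G) (w : ℕ) (hbags : ∀ i, (D.bag i).card ≤ w + 1) :
    Fintype.card V / 8 ≤ w := by
  classical
  set n := Fintype.card V with hn
  have hn1 : 1 ≤ n := Fintype.card_pos
  obtain ⟨j, hgood⟩ := exists_good_bag D
  set B := D.bag j with hB
  have hBn : B.card ≤ n := Finset.card_le_univ B
  have hBw : B.card ≤ w + 1 := hbags j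
  rw [Nat.div_le_iff_le_mul_add_pred (by norm_num)]
  -- suffices: n ≤ 8 * w + 7, i.e. n < 8 * (w+1)
  by_cases hsmall : 4 * (n - B.card) ≤ n
  · omega
  · -- main case: the components of G - B are collectively large
    push_neg at hsmall
    set P : Set V := (↑B)ᶜ with hP
    set G' := G.induce P with hG'
    haveI : Fintype ↥P := Set.Finite.fintype (Set.toFinite P)
    haveI : Finite G'.ConnectedComponent := Quot.finite _
    haveI : Fintype G'.ConnectedComponent := Fintype.ofFinite _
    set f : G'.ConnectedComponent → ℕ :=
      fun c => (Finset.univ.filter fun x : ↥P => G'.connectedComponentMk x = c).card with hf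
    have hcardP : Fintype.card ↥P = n - B.card := by
      have h1 : Fintype.card ↥P = P.ncard := by
        rw [← Nat.card_eq_fintype_card, Nat.card_coe_set_eq]
      have h2 : (↑B : Set V).ncard + P.ncard = n := by
        rw [hP]
        rw [Set.ncard_add_ncard_compl, Nat.card_eq_fintype_card]
      have h3 : (↑B : Set V).ncard = B.card := Set.ncard_coe_finset B
      omega
    have hsum : ∑ c, f c = n - B.card := by
      rw [← hcardP, ← Finset.card_univ]
      exact (Finset.card_eq_sum_card_fiberwise (fun x _ => Finset.mem_univ _)).symm
    -- each component is connected in G, avoids B, and so is small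
    have hwalkP : ∀ (x y : ↥P) (q : G'.Walk x y), ∀ z ∈ (q.map
        (SimpleGraph.Embedding.induce P).toHom).support, ∃ z' : ↥P, z' ∈ q.support ∧ ↑z' = z := by
      intro x y q z hz
      rw [SimpleGraph.Walk.support_map] at hz
      obtain ⟨y', hy', hyz⟩ := List.mem_map.mp hz
      exact ⟨y', hy', hyz⟩
    have hcomp : ∀ c : G'.ConnectedComponent, 2 * f c ≤ n := by
      intro c
      set Cf : Finset V :=
        (Finset.univ.filter fun x : ↥P => G'.connectedComponentMk x = c).image Subtype.val with hCf
      have hcard : Cf.card = f c := Finset.card_image_of_injective _ Subtype.val_injective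
      have hconn : Conn G (↑Cf : Set V) := by
        intro u hu v hv
        rw [hCf] at hu hv
        simp only [Finset.coe_image, Set.mem_image, Finset.mem_coe, Finset.mem_filter] at hu hv
        obtain ⟨x, ⟨-, hx2⟩, rfl⟩ := hu
        obtain ⟨y, ⟨-, hy2⟩, rfl⟩ := hv
        obtain ⟨q⟩ := SimpleGraph.ConnectedComponent.exact (hx2.trans hy2.symm)
        refine ⟨q.map (SimpleGraph.Embedding.induce P).toHom, ?_⟩
        intro z hz
        obtain ⟨z', hz', rfl⟩ := hwalkP x y q z hz
        have hreach : G'.Reachable x z' := ⟨q.takeUntil z' hz'⟩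
        simp only [hCf, Finset.coe_image, Set.mem_image, Finset.mem_coe, Finset.mem_filter]
        exact ⟨z', ⟨Finset.mem_univ _, (SimpleGraph.ConnectedComponent.sound hreach).symm.trans
          hx2⟩, rfl⟩
      have havoid : ∀ x ∈ (↑Cf : Set V), x ∉ D.bag j := by
        intro x hx
        rw [hCf] at hx
        simp only [Finset.coe_image, Set.mem_image, Finset.mem_coe, Finset.mem_filter] at hx
        obtain ⟨x', -, rfl⟩ := hx
        exact x'.2
      have h2 := hgood (↑Cf : Set V) hconn havoid
      rwa [Set.ncard_coe_finset, hcard] at h2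
    have htot : n < 4 * ∑ c, f c := by rw [hsum]; omega
    obtain ⟨t, -, ht2, ht3⟩ := greedy' n f Finset.univ (fun c _ => hcomp c) htot
    -- the union of the chosen components
    set Xf : Finset V :=
      (Finset.univ.filter fun x : ↥P => G'.connectedComponentMk x ∈ t).image Subtype.val with hXf
    have hXcard : Xf.card = ∑ c ∈ t, f c := by
      rw [hXf, Finset.card_image_of_injective _ Subtype.val_injective]
      rw [Finset.card_eq_sum_card_fiberwise
        (fun x hx => (Finset.mem_filter.mp hx).2 : ∀ x ∈ (Finset.univ.filter
          fun x : ↥P => G'.connectedComponentMk x ∈ t), G'.connectedComponentMk x ∈ t)]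
      refine Finset.sum_congr rfl fun c hc => ?_
      congr 1
      ext x
      simp only [Finset.mem_filter, Finset.mem_univ, true_and, Finset.filter_filter]
      exact ⟨fun h => h.2, fun h => ⟨h ▸ hc, h⟩⟩
    set X : Set V := (↑Xf : Set V) with hX
    have hXncard : X.ncard = ∑ c ∈ t, f c := by rw [hX, Set.ncard_coe_finset, hXcard]
    have hXpos : 0 < X.ncard := by omega
    have hXne : X.Nonempty := Set.nonempty_of_ncard_ne_zero (by omega)
    -- the external neighborhood is inside the bag
    have hnbhd : extNbhd G X ⊆ (↑B : Set V) := by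
      rintro v ⟨hv1, u, hu, hadj⟩
      by_contra hvB
      have hvP : v ∈ P := by rw [hP]; simpa using hvB
      rw [hX, hXf] at hu
      simp only [Finset.coe_image, Set.mem_image, Finset.mem_coe, Finset.mem_filter] at hu
      obtain ⟨x, ⟨-, hx2⟩, rfl⟩ := hu
      have hadj' : G'.Adj x ⟨v, hvP⟩ := hadj
      have : G'.connectedComponentMk ⟨v, hvP⟩ ∈ t := by
        rwa [← SimpleGraph.ConnectedComponent.connectedComponentMk_eq_of_adj hadj']
      refine hv1 ?_
      rw [hX, hXf]
      simp only [Finset.coe_image, Set.mem_image, Finset.mem_coe, Finset.mem_filter]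
      exact ⟨⟨v, hvP⟩, ⟨Finset.mem_univ _, this⟩, rfl⟩
    -- use the expansion hypothesis
    have hmem : ((extNbhd G X).ncard : ℝ) / X.ncard ∈
        {r : ℝ | ∃ Y : Set V, Y.Nonempty ∧ (Y.ncard : ℝ) ≤ 1 / 2 * Fintype.card V ∧
          r = (extNbhd G Y).ncard / Y.ncard} := by
      refine ⟨X, hXne, ?_, rfl⟩
      rw [← hn]
      have : (2 * X.ncard : ℝ) ≤ n := by exact_mod_cast (by omega : 2 * X.ncard ≤ n)
      linarith
    have hbdd : BddBelow {r : ℝ | ∃ Y : Set V, Y.Nonempty ∧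
        (Y.ncard : ℝ) ≤ 1 / 2 * Fintype.card V ∧ r = (extNbhd G Y).ncard / Y.ncard} := by
      refine ⟨0, ?_⟩
      rintro r ⟨Y, -, -, rfl⟩
      positivity
    have hle : (1 : ℝ) / 2 ≤ ((extNbhd G X).ncard : ℝ) / X.ncard :=
      le_trans hexp (csInf_le hbdd hmem)
    have hXr : (0 : ℝ) < (X.ncard : ℝ) := by exact_mod_cast hXpos
    have hkey : (X.ncard : ℝ) ≤ 2 * (extNbhd G X).ncard := by
      rw [le_div_iff₀ hXr] at hle
      linarith
    have hkeyN : X.ncard ≤ 2 * (extNbhd G X).ncard := by exact_mod_cast hkey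
    have hNB : (extNbhd G X).ncard ≤ B.card := by
      have := Set.ncard_le_ncard hnbhd (Set.toFinite _)
      rwa [Set.ncard_coe_finset] at this
    omega


/-- If `x_{1/2}(G) ≥ 1/2` on `n` vertices, then `tw(G) ≥ ⌊n / 8⌋`. -/
theorem treewidth_ge_of_expander {V : Type} [Fintype V] [Nonempty V]
    (G : SimpleGraph V) (hexp : (1 : ℝ) / 2 ≤ vertexExpansion G (1 / 2)) :
    Fintype.card V / 8 ≤ treewidth G := by
  classical
  have htriv : ∃ D : TreeDecomp G, ∀ i, (D.bag i).card ≤ (Fintype.card V - 1) + 1 := by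
    have hconn0 : (⊥ : SimpleGraph PUnit).Connected := by
      rw [SimpleGraph.connected_iff]
      refine ⟨fun u v => by cases u; cases v; exact SimpleGraph.Reachable.refl _, ⟨PUnit.unit⟩⟩
    refine ⟨⟨PUnit, ⊥, ⟨hconn0, SimpleGraph.isAcyclic_bot⟩, fun _ => Finset.univ,
      fun v => ⟨PUnit.unit, Finset.mem_univ v⟩,
      fun u v _ => ⟨PUnit.unit, Finset.mem_univ u, Finset.mem_univ v⟩, fun v => ?_⟩, fun i => ?_⟩
    · rw [SimpleGraph.connected_iff]
      refine ⟨fun a b => ?_, ⟨⟨PUnit.unit, Finset.mem_univ v⟩⟩⟩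
      have hab : a = b := Subsingleton.elim a b
      subst hab
      exact SimpleGraph.Reachable.refl _
    · have h1 : (1 : ℕ) ≤ Fintype.card V := Fintype.card_pos
      simp only [Finset.card_univ]
      omega
  have hne : {w | ∃ D : TreeDecomp G, ∀ i, (D.bag i).card ≤ w + 1}.Nonempty :=
    ⟨Fintype.card V - 1, htriv⟩
  obtain ⟨D, hD⟩ := Nat.sInf_mem hne
  exact bag_bound hexp D (treewidth G) hD
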